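/- arXiv:2007.14737 — 2 statements merged into one kernel-verified Lean document; each statement's English description precedes it below -/
import Mathlib

section
/- Suppose Ξ is holomorphic on S_α, extends continuously to the closure of S_α, satisfies the jump relation Ξ₊(g(x) − iα) = Ξ₋(x) + G_Ξ(x) for all x ∈ ℝ, and that there exist constants C_Ξ, C₋₁ ∈ ℂ such that, uniformly up to the boundary, Ξ(z) = C₋₁/z + O(z^{−2}) as Re(z) → +∞ and Ξ(z) = C_Ξ + C₋₁/z + O(z^{−2}) as Re(z) → −∞. Then, uniformly up to the boundary, Ξ(z) = −𝒢(z) + O(e^{−(2π/α)·Re(γ̃₊z)}) as Re(z) → +∞ and Ξ(z) = C_Ξ − 𝒢(z) + O(e^{(2π/α)·Re(γ̃₋z)}) as Re(z) → −∞. -/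
open MeasureTheory Real Set

noncomputable section

/-- The strip `S_α = {z ∈ ℂ : −α < Im z < 0}`. -/
def Strip (α : ℝ) : Set ℂ := {z : ℂ | -α < z.im ∧ z.im < 0}

/-- `γ̃ = −iα/(κ − iα)`. -/
def gamTilde (α κ : ℝ) : ℂ := -(Complex.I * (α : ℂ)) / ((κ : ℂ) - Complex.I * (α : ℂ))

section AuxDecay

open Complex Set Metric intervalIntegral MeasureTheory Filter

lemma memBall_of_reim {c : ℂ} {r : ℝ} {x y : ℝ}
    (hx : |x - c.re| < r / 3) (hy : |y - c.im| < r / 3) :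
    (x + y * I : ℂ) ∈ ball c r := by
  rw [mem_ball, Complex.dist_eq]
  have h1 : ((x : ℂ) + y * I - c).re = x - c.re := by simp
  have h2 : ((x : ℂ) + y * I - c).im = y - c.im := by simp
  calc ‖(x : ℂ) + y * I - c‖
      ≤ |((x:ℂ) + y*I - c).re| + |((x:ℂ)+y*I-c).im| := Complex.norm_le_abs_re_add_abs_im _
    _ < r/3 + r/3 := by rw [h1, h2]; exact add_lt_add hx hy
    _ ≤ r := by
        have : (0:ℝ) ≤ r/3 := le_trans (abs_nonneg _) hx.le
        linarith

lemma memBall_of_reim' {c ξ : ℂ} {r : ℝ}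
    (hx : |ξ.re - c.re| < r / 3) (hy : |ξ.im - c.im| < r / 3) :
    ξ ∈ ball c r := by
  simpa [Complex.re_add_im] using memBall_of_reim (c := c) (r := r) hx hy

lemma horizIntegrable {f : ℂ → ℂ} {c : ℂ} {r : ℝ}
    (hc : ContinuousOn f (ball c r)) {x₁ x₂ y : ℝ}
    (h1 : |x₁ - c.re| < r/3) (h2 : |x₂ - c.re| < r/3) (hy : |y - c.im| < r/3) :
    IntervalIntegrable (fun t : ℝ => f ((t : ℂ) + y * I)) volume x₁ x₂ := by
  apply ContinuousOn.intervalIntegrable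
  apply hc.comp (Continuous.continuousOn (by fun_prop))
  intro t ht
  have h1' := abs_lt.mp h1
  have h2' := abs_lt.mp h2
  refine memBall_of_reim (abs_lt.mpr ?_) hy
  rcases Set.mem_uIcc.mp ht with ⟨ha, hb⟩ | ⟨ha, hb⟩ <;> constructor <;> linarith

lemma vertIntegrable {f : ℂ → ℂ} {c : ℂ} {r : ℝ}
    (hc : ContinuousOn f (ball c r)) {x y₁ y₂ : ℝ}
    (hx : |x - c.re| < r/3) (h1 : |y₁ - c.im| < r/3) (h2 : |y₂ - c.im| < r/3) :
    IntervalIntegrable (fun t : ℝ => f ((x : ℂ) + t * I)) volume y₁ y₂ := by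
  apply ContinuousOn.intervalIntegrable
  apply hc.comp (Continuous.continuousOn (by fun_prop))
  intro t ht
  have h1' := abs_lt.mp h1
  have h2' := abs_lt.mp h2
  refine memBall_of_reim hx (abs_lt.mpr ?_)
  rcases Set.mem_uIcc.mp ht with ⟨ha, hb⟩ | ⟨ha, hb⟩ <;> constructor <;> linarith

lemma differentiableAt_of_diff_off_horiz {f : ℂ → ℂ} {c : ℂ} {r : ℝ} (hr : 0 < r)
    (hc : ContinuousOn f (ball c r))
    (hd : ∀ z ∈ ball c r, z.im ≠ c.im → DifferentiableAt ℂ f z) :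
    DifferentiableAt ℂ f c := by
  set g : ℂ → ℂ := fun z =>
    (∫ t in c.re..z.re, f ((t:ℂ) + c.im * I)) + I * ∫ t in c.im..z.im, f ((z.re : ℂ) + t * I)
    with hgdef
  have hcoord : ∀ z ∈ ball c (r/3), |z.re - c.re| < r/3 ∧ |z.im - c.im| < r/3 := by
    intro z hz
    rw [mem_ball, Complex.dist_eq] at hz
    constructor
    · exact lt_of_le_of_lt (by simpa using Complex.abs_re_le_norm (z - c)) hz
    · exact lt_of_le_of_lt (by simpa using Complex.abs_im_le_norm (z - c)) hz
  have hself : |c.re - c.re| < r/3 ∧ |c.im - c.im| < r/3 := by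
    constructor <;> simp <;> positivity
  have key : ∀ z ∈ ball c (r/3), HasDerivAt g (f z) z := by
    intro z hz
    obtain ⟨hzre, hzim⟩ := hcoord z hz
    have hdiff : ∀ w ∈ ball c (r/3),
        g w - g z = (∫ t in z.re..w.re, f ((t:ℂ) + z.im * I))
          + I * ∫ t in z.im..w.im, f ((w.re : ℂ) + t * I) := by
      intro w hw
      obtain ⟨hwre, hwim⟩ := hcoord w hw
      have hball : ∀ ξ : ℂ, ξ.re ∈ Set.uIcc z.re w.re → ξ.im ∈ Set.uIcc c.im z.im →
          ξ ∈ ball c r := by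
        intro ξ hξ1 hξ2
        have h1' := abs_lt.mp hzre; have h2' := abs_lt.mp hwre; have h3' := abs_lt.mp hzim
        refine memBall_of_reim' (abs_lt.mpr ?_) (abs_lt.mpr ?_)
        · rcases Set.mem_uIcc.mp hξ1 with ⟨ha, hb⟩ | ⟨ha, hb⟩ <;> constructor <;> linarith
        · rcases Set.mem_uIcc.mp hξ2 with ⟨ha, hb⟩ | ⟨ha, hb⟩ <;> constructor <;>
            (try linarith) <;> linarith [abs_nonneg (z.im - c.im)]
      have hrect := integral_boundary_rect_eq_zero_of_continuousOn_of_differentiableOn f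
        ((z.re : ℂ) + c.im * I) ((w.re : ℂ) + z.im * I) ?_ ?_
      · simp only [Complex.add_re, Complex.add_im, Complex.ofReal_re, Complex.ofReal_im,
          Complex.mul_re, Complex.mul_im, Complex.I_re, Complex.I_im, mul_zero, mul_one,
          zero_mul, sub_zero, zero_sub, add_zero, zero_add, neg_zero, smul_eq_mul] at hrect
        have e1 : (∫ t in c.re..w.re, f ((t:ℂ) + c.im * I))
            - ∫ t in c.re..z.re, f ((t:ℂ) + c.im * I)
            = ∫ t in z.re..w.re, f ((t:ℂ) + c.im * I) :=
          integral_interval_sub_left (horizIntegrable hc hself.1 hwre hself.2)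
            (horizIntegrable hc hself.1 hzre hself.2)
        have e2 : (∫ t in c.im..z.im, f ((w.re:ℂ) + t * I))
            + ∫ t in z.im..w.im, f ((w.re:ℂ) + t * I)
            = ∫ t in c.im..w.im, f ((w.re:ℂ) + t * I) :=
          integral_add_adjacent_intervals (vertIntegrable hc hwre hself.2 hzim)
            (vertIntegrable hc hwre hzim hwim)
        simp only [hgdef]
        linear_combination e1 - Complex.I * e2 + hrect
      · -- continuity on closed rectangle
        refine hc.mono ?_
        intro ξ hξ
        obtain ⟨hξ1, hξ2⟩ := Complex.mem_reProdIm.mp hξ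
        simp only [Complex.add_re, Complex.add_im, Complex.ofReal_re, Complex.ofReal_im,
          Complex.mul_re, Complex.mul_im, Complex.I_re, Complex.I_im, mul_zero, mul_one,
          zero_mul, sub_zero, zero_sub, add_zero, zero_add, neg_zero] at hξ1 hξ2
        exact hball ξ hξ1 hξ2
      · -- differentiability on open rectangle
        intro ξ hξ
        obtain ⟨hξ1, hξ2⟩ := Complex.mem_reProdIm.mp hξ
        simp only [Complex.add_re, Complex.add_im, Complex.ofReal_re, Complex.ofReal_im,
          Complex.mul_re, Complex.mul_im, Complex.I_re, Complex.I_im, mul_zero, mul_one,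
          zero_mul, sub_zero, zero_sub, add_zero, zero_add, neg_zero] at hξ1 hξ2
        have hmem : ξ ∈ ball c r := by
          refine hball ξ (Set.mem_uIcc.mpr ?_) (Set.mem_uIcc.mpr ?_)
          · rcases le_total z.re w.re with h | h
            · rw [min_eq_left h, max_eq_right h] at hξ1; exact Or.inl ⟨hξ1.1.le, hξ1.2.le⟩
            · rw [min_eq_right h, max_eq_left h] at hξ1; exact Or.inr ⟨hξ1.1.le, hξ1.2.le⟩
          · rcases le_total c.im z.im with h | h
            · rw [min_eq_left h, max_eq_right h] at hξ2; exact Or.inl ⟨hξ2.1.le, hξ2.2.le⟩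
            · rw [min_eq_right h, max_eq_left h] at hξ2; exact Or.inr ⟨hξ2.1.le, hξ2.2.le⟩
        have hne : ξ.im ≠ c.im := by
          intro heq
          rcases le_total c.im z.im with h | h
          · rw [min_eq_left h, max_eq_right h] at hξ2; linarith [hξ2.1, hξ2.2]
          · rw [min_eq_right h, max_eq_left h] at hξ2; linarith [hξ2.1, hξ2.2]
        exact (hd ξ hmem hne).differentiableWithinAt
    -- now the derivative estimate
    rw [hasDerivAt_iff_isLittleO, Asymptotics.isLittleO_iff]
    intro ε hε
    have hzr : z ∈ ball c r := ball_subset_ball (by linarith) hz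
    have hcz : ContinuousAt f z := hc.continuousAt (isOpen_ball.mem_nhds hzr)
    obtain ⟨δ, hδ, hδf⟩ := Metric.continuousAt_iff.mp hcz (ε/2) (half_pos hε)
    have hpos : 0 < min (δ/2) (r/3 - dist z c) := by
      apply lt_min (by positivity)
      rw [mem_ball] at hz; linarith
    filter_upwards [Metric.ball_mem_nhds z hpos] with w hw
    rw [mem_ball] at hw
    have hwz : dist w z < δ/2 := lt_of_lt_of_le hw (min_le_left _ _)
    have hwb : w ∈ ball c (r/3) := by
      rw [mem_ball]
      calc dist w c ≤ dist w z + dist z c := dist_triangle _ _ _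
        _ < (r/3 - dist z c) + dist z c := by
            have := lt_of_lt_of_le hw (min_le_right _ _); linarith
        _ = r/3 := by ring
    obtain ⟨hwre', hwim'⟩ := hcoord w hwb
    have hzre' := (hcoord z hz).1
    have hwzre : |w.re - z.re| ≤ dist w z := by
      rw [dist_eq_norm]
      simpa using Complex.abs_re_le_norm (w - z)
    have hwzim : |w.im - z.im| ≤ dist w z := by
      rw [dist_eq_norm]
      simpa using Complex.abs_im_le_norm (w - z)
    have hint1 : IntervalIntegrable (fun t : ℝ => f ((t:ℂ) + z.im * I)) volume z.re w.re :=
      horizIntegrable hc hzre' hwre' hzim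
    have hint2 : IntervalIntegrable (fun t : ℝ => f ((w.re:ℂ) + t * I)) volume z.im w.im :=
      vertIntegrable hc hwre' hzim hwim'
    have hsplit : g w - g z - (w - z) • f z
        = (∫ t in z.re..w.re, (f ((t:ℂ) + z.im * I) - f z))
          + I * ∫ t in z.im..w.im, (f ((w.re:ℂ) + t * I) - f z) := by
      rw [intervalIntegral.integral_sub hint1 intervalIntegrable_const,
        intervalIntegral.integral_sub hint2 intervalIntegrable_const,
        intervalIntegral.integral_const, intervalIntegral.integral_const, hdiff w hwb]
      have hwz' : (w - z) = ((w.re - z.re : ℝ) : ℂ) + ((w.im - z.im : ℝ) : ℂ) * I := by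
        simp [Complex.ext_iff]
      rw [smul_eq_mul, hwz']
      push_cast
      simp only [real_smul]
      push_cast
      ring
    rw [hsplit]
    have hb1 : ‖∫ t in z.re..w.re, (f ((t:ℂ) + z.im * I) - f z)‖ ≤ ε/2 * |w.re - z.re| := by
      apply intervalIntegral.norm_integral_le_of_norm_le_const
      intro t ht
      have ht' : |t - z.re| ≤ |w.re - z.re| := by
        rcases Set.mem_uIoc.mp ht with ⟨ha, hb⟩ | ⟨ha, hb⟩ <;> rw [abs_le] <;>
          constructor <;> simp [abs_le] <;> cases abs_le.mp (le_refl |w.re - z.re|) <;> linarith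
      have hdist : dist ((t:ℂ) + z.im * I) z < δ := by
        rw [Complex.dist_eq]
        have : ((t:ℂ) + z.im * I - z).im = 0 := by simp
        have hre : ((t:ℂ) + z.im * I - z).re = t - z.re := by simp
        calc ‖(t:ℂ) + z.im * I - z‖
            ≤ |((t:ℂ) + z.im * I - z).re| + |((t:ℂ) + z.im * I - z).im| :=
              Complex.norm_le_abs_re_add_abs_im _
          _ = |t - z.re| := by rw [hre, this]; simp
          _ < δ := by
              calc |t - z.re| ≤ |w.re - z.re| := ht'
                _ ≤ dist w z := hwzre
                _ < δ := by linarith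
      have := hδf hdist
      rw [dist_eq_norm] at this
      exact this.le
    have hb2 : ‖∫ t in z.im..w.im, (f ((w.re:ℂ) + t * I) - f z)‖ ≤ ε/2 * |w.im - z.im| := by
      apply intervalIntegral.norm_integral_le_of_norm_le_const
      intro t ht
      have ht' : |t - z.im| ≤ |w.im - z.im| := by
        rcases Set.mem_uIoc.mp ht with ⟨ha, hb⟩ | ⟨ha, hb⟩ <;> rw [abs_le] <;>
          constructor <;> simp [abs_le] <;> cases abs_le.mp (le_refl |w.im - z.im|) <;> linarith
      have hdist : dist ((w.re:ℂ) + t * I) z < δ := by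
        rw [Complex.dist_eq]
        have hre : ((w.re:ℂ) + t * I - z).re = w.re - z.re := by simp
        have him : ((w.re:ℂ) + t * I - z).im = t - z.im := by simp
        calc ‖(w.re:ℂ) + t * I - z‖
            ≤ |((w.re:ℂ) + t * I - z).re| + |((w.re:ℂ) + t * I - z).im| :=
              Complex.norm_le_abs_re_add_abs_im _
          _ = |w.re - z.re| + |t - z.im| := by rw [hre, him]
          _ < δ := by
              have h1 : |w.re - z.re| ≤ dist w z := hwzre
              have h2 : |t - z.im| ≤ |w.im - z.im| := ht'
              have h3 : |w.im - z.im| ≤ dist w z := hwzim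
              linarith
      have := hδf hdist
      rw [dist_eq_norm] at this
      exact this.le
    have hnormwz : ‖w - z‖ = dist w z := by rw [dist_eq_norm]
    calc ‖(∫ t in z.re..w.re, (f ((t:ℂ) + z.im * I) - f z))
          + I * ∫ t in z.im..w.im, (f ((w.re:ℂ) + t * I) - f z)‖
        ≤ ‖∫ t in z.re..w.re, (f ((t:ℂ) + z.im * I) - f z)‖
          + ‖I * ∫ t in z.im..w.im, (f ((w.re:ℂ) + t * I) - f z)‖ := norm_add_le _ _
      _ = ‖∫ t in z.re..w.re, (f ((t:ℂ) + z.im * I) - f z)‖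
          + ‖∫ t in z.im..w.im, (f ((w.re:ℂ) + t * I) - f z)‖ := by
            rw [norm_mul, Complex.norm_I, one_mul]
      _ ≤ ε/2 * |w.re - z.re| + ε/2 * |w.im - z.im| := add_le_add hb1 hb2
      _ ≤ ε/2 * ‖w - z‖ + ε/2 * ‖w - z‖ := by
          rw [hnormwz]
          have hε2 : (0:ℝ) ≤ ε/2 := le_of_lt (half_pos hε)
          exact add_le_add (mul_le_mul_of_nonneg_left hwzre hε2)
            (mul_le_mul_of_nonneg_left hwzim hε2)
      _ = ε * ‖w - z‖ := by ring
  -- conclude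
  have hr3 : 0 < r/3 := by positivity
  have hgd : DifferentiableOn ℂ g (ball c (r/3)) := fun z hz =>
    ((key z hz).differentiableAt).differentiableWithinAt
  have hga : AnalyticOnNhd ℂ g (ball c (r/3)) := hgd.analyticOnNhd isOpen_ball
  have hderiv : DifferentiableAt ℂ (deriv g) c :=
    ((hga.deriv) c (mem_ball_self hr3)).differentiableAt
  apply hderiv.congr_of_eventuallyEq
  filter_upwards [isOpen_ball.mem_nhds (mem_ball_self hr3)] with w hw
  exact ((key w hw).deriv).symm

lemma differentiableAt_of_diff_off_line {f : ℂ → ℂ} {c e : ℂ} (he : e ≠ 0) {r : ℝ} (hr : 0 < r)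
    (hc : ContinuousOn f (ball c r))
    (hd : ∀ z ∈ ball c r, (z * e).im ≠ (c * e).im → DifferentiableAt ℂ f z) :
    DifferentiableAt ℂ f c := by
  have hg : DifferentiableAt ℂ (fun ξ : ℂ => f (c + ξ / e)) 0 := by
    apply differentiableAt_of_diff_off_horiz (r := r * ‖e‖) (mul_pos hr (norm_pos_iff.mpr he))
    · apply hc.comp (Continuous.continuousOn (by fun_prop))
      intro ξ hξ
      rw [mem_ball, dist_zero_right] at hξ
      rw [mem_ball, dist_eq_norm]
      have : ‖c + ξ / e - c‖ = ‖ξ‖ / ‖e‖ := by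
        rw [add_sub_cancel_left, norm_div]
      rw [this]
      rw [div_lt_iff₀ (norm_pos_iff.mpr he)]
      linarith
    · intro ξ hξ hne
      rw [mem_ball, dist_zero_right] at hξ
      have hmem : c + ξ / e ∈ ball c r := by
        rw [mem_ball, dist_eq_norm, add_sub_cancel_left, norm_div]
        rw [div_lt_iff₀ (norm_pos_iff.mpr he)]
        linarith
      have hne' : ((c + ξ / e) * e).im ≠ (c * e).im := by
        rw [add_mul, div_mul_cancel₀ _ he, Complex.add_im]
        simp only [Complex.zero_im] at hne
        intro h
        apply hne
        linarith [h]
      exact (hd _ hmem hne').comp ξ (by fun_prop)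
  have hfg : f = (fun ξ : ℂ => f (c + ξ / e)) ∘ (fun z => (z - c) * e) := by
    funext z
    simp only [Function.comp_apply]
    rw [mul_div_cancel_right₀ _ he]
    ring_nf
  rw [hfg]
  have : DifferentiableAt ℂ (fun z : ℂ => (z - c) * e) c := by fun_prop
  have h0 : (c - c) * e = 0 := by ring
  exact DifferentiableAt.comp c (h0 ▸ hg) this

set_option maxHeartbeats 1000000 in
lemma halfplane_exp_decay (α κ R₀ : ℝ) (hα : 0 < α) (F : ℂ → ℂ)
    (hFc : ContinuousOn F {w : ℂ | -α ≤ w.im ∧ w.im ≤ 0 ∧ R₀ ≤ w.re})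
    (hFd : ∀ z : ℂ, -α < z.im → z.im < 0 → R₀ < z.re → DifferentiableAt ℂ F z)
    (hBC : ∀ x : ℝ, R₀ ≤ x → F ((x:ℂ) + ((κ:ℂ) - I*(α:ℂ))) = F ((x:ℂ)))
    (hdecay : ∀ ε : ℝ, 0 < ε → ∃ R : ℝ, ∀ z : ℂ, -α ≤ z.im → z.im ≤ 0 → R ≤ z.re → ‖F z‖ ≤ ε) :
    ∃ C' X' : ℝ, 0 < C' ∧ ∀ z : ℂ, -α ≤ z.im → z.im ≤ 0 → X' ≤ z.re →
      ‖F z‖ ≤ C' * Real.exp (-2 * Real.pi * (z / ((κ:ℂ) - I*(α:ℂ))).im) := by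
  set p : ℂ := (κ:ℂ) - I*(α:ℂ) with hpdef
  have hpre : p.re = κ := by simp [hpdef]
  have hpim : p.im = -α := by simp [hpdef]
  have hp0 : p ≠ 0 := by
    intro h
    have : p.im = 0 := by rw [h]; simp
    rw [hpim] at this; linarith
  have hα0 : α ≠ 0 := ne_of_gt hα
  set u : ℂ → ℝ := fun ζ => (ζ * p).im / (-α) with hudef
  have hu_cont : Continuous u := by
    apply Continuous.div_const
    exact Complex.continuous_im.comp (continuous_id.mul continuous_const)
  set D : Set ℂ := {w : ℂ | -α ≤ w.im ∧ w.im ≤ 0 ∧ R₀ ≤ w.re} with hDdef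
  set f : ℂ → ℂ := fun ζ => F (p * (ζ - ((⌊u ζ⌋ : ℤ) : ℂ))) with hfdef
  -- basic re/im computations
  have hu_eq : ∀ ξ : ℂ, u ξ = ξ.re - κ/α * ξ.im := by
    intro ξ
    simp only [hudef, Complex.mul_im, Complex.mul_re, hpre, hpim]
    field_simp [hα0]
    ring
  have him : ∀ (ξ : ℂ) (m : ℤ), (p * (ξ - (m:ℂ))).im = -α * (u ξ - m) := by
    intro ξ m
    rw [hu_eq]
    simp only [Complex.mul_im, Complex.sub_re, Complex.sub_im, Complex.intCast_re,
      Complex.intCast_im, hpre, hpim]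
    field_simp [hα0]
    ring
  have hre : ∀ (ξ : ℂ) (m : ℤ), (p * (ξ - (m:ℂ))).re
      = κ * (u ξ - m) + ((κ^2+α^2)/α) * ξ.im := by
    intro ξ m
    rw [hu_eq]
    simp only [Complex.mul_re, Complex.sub_re, Complex.sub_im, Complex.intCast_re,
      Complex.intCast_im, hpre, hpim]
    field_simp [hα0]
    ring
  set β : ℝ := (κ^2+α^2)/α with hβdef
  have hβ : 0 < β := by positivity
  set R₁ : ℝ := |R₀| + |κ| + 1 with hR₁def
  have hR₁ : R₀ ≤ R₁ ∧ R₀ < R₁ ∧ R₀ ≤ R₁ - |κ| := by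
    have := le_abs_self R₀; have := abs_nonneg κ
    refine ⟨by linarith, by linarith, by linarith⟩
  set T₀ : ℝ := (R₁ + |κ|)/β + 1 with hT₀def
  have hru : ∀ (ξ : ℂ) (m : ℤ), T₀ - 1 ≤ ξ.im → |u ξ - m| ≤ 1 →
      R₁ ≤ (p * (ξ - (m:ℂ))).re := by
    intro ξ m hT hum
    rw [hre]
    have h1 : -|κ| ≤ κ * (u ξ - m) := by
      have h2 : |κ * (u ξ - m)| ≤ |κ| := by
        rw [abs_mul]
        calc |κ| * |u ξ - ↑m| ≤ |κ| * 1 := by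
              exact mul_le_mul_of_nonneg_left hum (abs_nonneg _)
          _ = |κ| := mul_one _
      linarith [neg_abs_le (κ * (u ξ - m))]
    have h3 : R₁ + |κ| ≤ β * ξ.im := by
      have : (R₁ + |κ|)/β ≤ ξ.im := by rw [hT₀def] at hT; linarith
      calc R₁ + |κ| = β * ((R₁ + |κ|)/β) := by field_simp [hα0]
        _ ≤ β * ξ.im := mul_le_mul_of_nonneg_left this hβ.le
    rw [hβdef] at h3
    linarith
  -- differentiability off the lines
  have hfdA : ∀ ζ : ℂ, T₀ - 1 ≤ ζ.im → (⌊u ζ⌋ : ℝ) < u ζ → DifferentiableAt ℂ f ζ := by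
    intro ζ hT hflt
    set m : ℤ := ⌊u ζ⌋ with hmdef
    have hlt : u ζ < m + 1 := Int.lt_floor_add_one _
    have hW : ∀ᶠ ξ in nhds ζ, ⌊u ξ⌋ = m := by
      have hop : IsOpen {ξ : ℂ | (m:ℝ) < u ξ ∧ u ξ < m+1} :=
        (isOpen_lt continuous_const hu_cont).inter (isOpen_lt hu_cont continuous_const)
      filter_upwards [hop.mem_nhds ⟨hflt, hlt⟩] with ξ hξ
      exact Int.floor_eq_iff.mpr ⟨hξ.1.le, hξ.2⟩
    have heq : f =ᶠ[nhds ζ] fun ξ => F (p * (ξ - (m:ℂ))) := by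
      filter_upwards [hW] with ξ hξ
      simp only [hfdef, hξ]
    have humle : |u ζ - m| ≤ 1 := by
      rw [abs_le]; constructor <;> [linarith; linarith]
    have hz' : DifferentiableAt ℂ F (p * (ζ - (m:ℂ))) := by
      apply hFd
      · rw [him]; nlinarith
      · rw [him]; nlinarith
      · have := hru ζ m hT humle; linarith [hR₁.2.1]
    have hcomp : DifferentiableAt ℂ (fun ξ : ℂ => F (p * (ξ - (m:ℂ)))) ζ :=
      hz'.comp ζ (by fun_prop)
    exact hcomp.congr_of_eventuallyEq heq
  -- continuity at the lines
  have hfcB : ∀ ζ : ℂ, T₀ ≤ ζ.im → u ζ = (⌊u ζ⌋ : ℝ) → ContinuousAt f ζ := by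
    intro ζ hT hm
    set m : ℤ := ⌊u ζ⌋ with hmdef
    set U : Set ℂ := {ξ : ℂ | (m:ℝ) - 1/2 < u ξ ∧ u ξ < m + 1/2 ∧ T₀ - 1 < ξ.im} with hUdef
    have hUopen : IsOpen U := by
      apply IsOpen.inter (isOpen_lt continuous_const hu_cont)
      exact (isOpen_lt hu_cont continuous_const).inter
        (isOpen_lt continuous_const Complex.continuous_im)
    have hζU : ζ ∈ U := by
      refine ⟨by rw [hm]; norm_num, by rw [hm]; norm_num, by linarith⟩
    set s : Set ℂ := U ∩ {ξ : ℂ | (m:ℝ) ≤ u ξ} with hsdef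
    set t : Set ℂ := U ∩ {ξ : ℂ | u ξ ≤ (m:ℝ)} with htdef
    have hstU : s ∪ t = U := by
      apply Subset.antisymm
      · exact union_subset inter_subset_left inter_subset_left
      · intro ξ hξ
        rcases le_total (m:ℝ) (u ξ) with h | h
        · exact Or.inl ⟨hξ, h⟩
        · exact Or.inr ⟨hξ, h⟩
    -- within s
    have hcs : ContinuousWithinAt f s ζ := by
      have hmem : p * (ζ - (m:ℂ)) ∈ D := by
        refine ⟨by rw [him, hm]; nlinarith, by rw [him, hm]; nlinarith, ?_⟩
        have := hru ζ m (by linarith) (by rw [hm]; simp)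
        linarith [hR₁.1]
      have hmt : MapsTo (fun ξ : ℂ => p * (ξ - (m:ℂ))) s D := by
        intro ξ hξ
        obtain ⟨⟨h1, h2, h3⟩, h4'⟩ := hξ
        have h4 : _ := Set.mem_setOf_eq ▸ h4'
        refine ⟨by rw [him]; nlinarith, by rw [him]; nlinarith, ?_⟩
        have := hru ξ m h3.le (by rw [abs_le]; constructor <;> linarith)
        linarith [hR₁.1]
      have hg : ContinuousWithinAt (fun ξ : ℂ => F (p * (ξ - (m:ℂ)))) s ζ :=
        ContinuousWithinAt.comp (hFc _ hmem) (Continuous.continuousWithinAt (by fun_prop)) hmt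
      apply hg.congr
      · intro ξ hξ
        obtain ⟨⟨h1, h2, h3⟩, h4'⟩ := hξ
        have h4 : _ := Set.mem_setOf_eq ▸ h4'
        have : ⌊u ξ⌋ = m := Int.floor_eq_iff.mpr ⟨h4, by linarith⟩
        simp only [hfdef, this]
      · simp only [hfdef, ← hmdef]
    -- within t
    have hct : ContinuousWithinAt f t ζ := by
      have hBCm : ∀ ξ : ℂ, u ξ = (m:ℝ) → T₀ - 1 ≤ ξ.im →
          F (p * (ξ - (m:ℂ))) = F (p * (ξ - (m:ℂ)) + p) := by
        intro ξ hu hTξ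
        have hre0 : R₁ ≤ (p * (ξ - (m:ℂ))).re := hru ξ m hTξ (by rw [hu]; simp)
        have him0 : (p * (ξ - (m:ℂ))).im = 0 := by rw [him, hu]; ring
        have hxeq : p * (ξ - (m:ℂ)) = (((p * (ξ - (m:ℂ))).re : ℝ) : ℂ) := by
          apply Complex.ext <;> simp [him0]
        rw [hxeq, hBC _ (by linarith [hR₁.1])]
      have hmem : p * (ζ - (m:ℂ)) + p ∈ D := by
        have h1 := him ζ m
        rw [hm] at h1
        refine ⟨?_, ?_, ?_⟩
        · rw [Complex.add_im, h1, hpim]; nlinarith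
        · rw [Complex.add_im, h1, hpim]; nlinarith
        · rw [Complex.add_re, hpre]
          have := hru ζ m (by linarith) (by rw [hm]; simp)
          have hk := neg_abs_le κ
          linarith [hR₁.2.2]
      have hmt : MapsTo (fun ξ : ℂ => p * (ξ - (m:ℂ)) + p) t D := by
        intro ξ hξ
        obtain ⟨⟨h1, h2, h3⟩, h4'⟩ := hξ
        have h4 : _ := Set.mem_setOf_eq ▸ h4'
        have h5 := him ξ m
        refine ⟨?_, ?_, ?_⟩
        · rw [Complex.add_im, h5, hpim]; nlinarith
        · rw [Complex.add_im, h5, hpim]; nlinarith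
        · rw [Complex.add_re, hpre]
          have := hru ξ m h3.le (by rw [abs_le]; constructor <;> linarith)
          have hk := neg_abs_le κ
          linarith [hR₁.2.2]
      have hg : ContinuousWithinAt (fun ξ : ℂ => F (p * (ξ - (m:ℂ)) + p)) t ζ :=
        ContinuousWithinAt.comp (hFc _ hmem) (Continuous.continuousWithinAt (by fun_prop)) hmt
      apply hg.congr
      · intro ξ hξ
        obtain ⟨⟨h1, h2, h3⟩, h4'⟩ := hξ
        have h4 : _ := Set.mem_setOf_eq ▸ h4'
        rcases eq_or_lt_of_le h4 with heq | hlt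
        · have : ⌊u ξ⌋ = m := by rw [heq]; exact Int.floor_intCast m
          simp only [hfdef, this]
          exact hBCm ξ heq h3.le
        · have hfl : ⌊u ξ⌋ = m - 1 := by
            apply Int.floor_eq_iff.mpr
            constructor
            · push_cast; linarith
            · push_cast; linarith
          simp only [hfdef, hfl]
          congr 1
          push_cast
          ring
      · simp only [hfdef, ← hmdef]
        exact hBCm ζ hm (by linarith)
    have hcst : ContinuousWithinAt f (s ∪ t) ζ := hcs.union hct
    apply hcst.continuousAt
    rw [hstU]
    exact hUopen.mem_nhds hζU
  -- differentiability on the lines, via the removable-line lemma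
  have habsp : 0 < ‖p‖ := by
    simpa using (norm_pos_iff.mpr hp0)
  set r : ℝ := min (α / (2 * ‖p‖)) 1 with hrdef
  have hrpos : 0 < r := lt_min (by positivity) one_pos
  have hr1 : r ≤ 1 := min_le_right _ _
  have hfdB : ∀ ζ : ℂ, T₀ + 1 ≤ ζ.im → u ζ = (⌊u ζ⌋ : ℝ) → DifferentiableAt ℂ f ζ := by
    intro ζ hT hm
    set m : ℤ := ⌊u ζ⌋ with hmdef
    have hudiff : ∀ ξ ∈ ball ζ r, |u ξ - u ζ| < 1/2 ∧ T₀ ≤ ξ.im := by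
      intro ξ hξ
      rw [mem_ball, Complex.dist_eq] at hξ
      constructor
      · have he1 : u ξ - u ζ = ((ξ - ζ) * p).im / (-α) := by
          simp only [hudef]
          rw [sub_mul, Complex.sub_im]
          ring
        rw [he1, abs_div, abs_neg, abs_of_pos hα]
        rw [div_lt_iff₀ hα]
        have him1 : |((ξ - ζ) * p).im| ≤ ‖(ξ - ζ) * p‖ := Complex.abs_im_le_norm _
        rw [norm_mul] at him1
        have h2 : ‖ξ - ζ‖ * ‖p‖ < r * ‖p‖ :=
          mul_lt_mul_of_pos_right hξ habsp
        have h3 : r * ‖p‖ ≤ α / 2 := by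
          have : r ≤ α / (2 * ‖p‖) := min_le_left _ _
          calc r * ‖p‖ ≤ (α / (2 * ‖p‖)) * ‖p‖ :=
                mul_le_mul_of_nonneg_right this habsp.le
            _ = α / 2 := by field_simp
        calc |((ξ - ζ) * p).im| ≤ ‖ξ - ζ‖ * ‖p‖ := him1
          _ < r * ‖p‖ := h2
          _ ≤ α / 2 := h3
          _ = 1/2 * α := by ring
      · have h4 : |ξ.im - ζ.im| ≤ ‖ξ - ζ‖ := by
          simpa using Complex.abs_im_le_norm (ξ - ζ)
        have h5 := abs_lt.mp (lt_of_le_of_lt h4 hξ)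
        linarith [h5.1]
    apply differentiableAt_of_diff_off_line (e := p) hp0 hrpos
    · intro ξ hξ
      obtain ⟨h1, h2⟩ := hudiff ξ hξ
      rcases (Int.floor_le (u ξ)).eq_or_lt with heq | hlt
      · exact (hfcB ξ h2 heq.symm).continuousWithinAt
      · exact ((hfdA ξ (by linarith) hlt).continuousAt).continuousWithinAt
    · intro ξ hξ hne
      obtain ⟨h1, h2⟩ := hudiff ξ hξ
      have hune : u ξ ≠ u ζ := by
        intro h
        apply hne
        have : (ξ * p).im / (-α) = (ζ * p).im / (-α) := h
        have hne0 : (-α) ≠ 0 := neg_ne_zero.mpr hα0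
        field_simp at this
        rw [mul_comm ζ p]; linarith
      rw [hm] at h1 hune
      have h1' := abs_lt.mp h1
      apply hfdA ξ (by linarith)
      rcases lt_or_gt_of_ne hune with hlt | hgt
      · have hfl : ⌊u ξ⌋ = m - 1 := by
          apply Int.floor_eq_iff.mpr
          constructor
          · push_cast; linarith
          · push_cast; linarith
        rw [hfl]; push_cast; linarith
      · have hfl : ⌊u ξ⌋ = m := by
          apply Int.floor_eq_iff.mpr
          exact ⟨hgt.le, by linarith⟩
        rw [hfl]; exact hgt
  have hfd : ∀ ζ : ℂ, T₀ + 1 ≤ ζ.im → DifferentiableAt ℂ f ζ := by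
    intro ζ hT
    rcases (Int.floor_le (u ζ)).eq_or_lt with heq | hlt
    · exact hfdB ζ hT heq.symm
    · exact hfdA ζ (by linarith) hlt
  -- periodicity
  have hper : Function.Periodic f (((1:ℝ)):ℂ) := by
    intro ζ
    have hu1 : u (ζ + 1) = u ζ + 1 := by
      simp only [hudef]
      rw [add_mul, one_mul, Complex.add_im, hpim, add_div, div_self (neg_ne_zero.mpr hα0)]
    have hcast : (((1:ℝ)):ℂ) = (1:ℂ) := by norm_num
    rw [hcast]
    simp only [hfdef, hu1, Int.floor_add_one]
    congr 1
    push_cast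
    ring
  -- membership of half-planes in the comap filter
  have hIinf : ∀ T : ℝ, {ξ : ℂ | T ≤ ξ.im} ∈ Filter.comap Complex.im Filter.atTop := by
    intro T
    exact Filter.preimage_mem_comap (Filter.Ici_mem_atTop T)
  have h_hol : ∀ᶠ ζ in Filter.comap Complex.im Filter.atTop, DifferentiableAt ℂ f ζ := by
    filter_upwards [hIinf (T₀+1)] with ζ h using hfd ζ h
  have h_zer : Filter.ZeroAtFilter (Filter.comap Complex.im Filter.atTop) f := by
    rw [Filter.ZeroAtFilter, Metric.tendsto_nhds]
    intro ε hε
    obtain ⟨R, hR⟩ := hdecay (ε/2) (half_pos hε)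
    filter_upwards [hIinf (max T₀ ((R + |κ|)/β))] with ζ hζ
    have hζ' : max T₀ ((R + |κ|)/β) ≤ ζ.im := hζ
    rw [dist_zero_right]
    have hfl1 : (⌊u ζ⌋ : ℝ) ≤ u ζ := Int.floor_le _
    have hfl2 : u ζ < ⌊u ζ⌋ + 1 := Int.lt_floor_add_one _
    have hb1 : -α ≤ (p * (ζ - ((⌊u ζ⌋:ℤ):ℂ))).im := by rw [him]; nlinarith
    have hb2 : (p * (ζ - ((⌊u ζ⌋:ℤ):ℂ))).im ≤ 0 := by rw [him]; nlinarith
    have hb3 : R ≤ (p * (ζ - ((⌊u ζ⌋:ℤ):ℂ))).re := by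
      rw [hre]
      have h1 : -|κ| ≤ κ * (u ζ - ⌊u ζ⌋) := by
        have h2 : |κ * (u ζ - ⌊u ζ⌋)| ≤ |κ| := by
          rw [abs_mul]
          have : |u ζ - (⌊u ζ⌋:ℝ)| ≤ 1 := by rw [abs_le]; constructor <;> linarith
          calc |κ| * |u ζ - (⌊u ζ⌋:ℝ)| ≤ |κ| * 1 :=
                mul_le_mul_of_nonneg_left this (abs_nonneg _)
            _ = |κ| := mul_one _
        linarith [neg_abs_le (κ * (u ζ - ⌊u ζ⌋))]
      have h3 : (R + |κ|)/β ≤ ζ.im := le_trans (le_max_right _ _) hζ'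
      have h4 : R + |κ| ≤ β * ζ.im := by
        calc R + |κ| = β * ((R + |κ|)/β) := by field_simp
          _ ≤ β * ζ.im := mul_le_mul_of_nonneg_left h3 hβ.le
      rw [hβdef] at h4
      linarith
    calc ‖f ζ‖ ≤ ε/2 := hR _ hb1 hb2 hb3
      _ < ε := by linarith
  -- exponential decay of f
  have hbigO := Function.Periodic.exp_decay_of_zero_at_inf one_pos hper h_hol h_zer
  obtain ⟨Cb, hCb0, hCb⟩ := hbigO.exists_pos
  rw [Asymptotics.isBigOWith_iff, Filter.eventually_comap, Filter.eventually_atTop] at hCb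
  obtain ⟨T₂, hT₂⟩ := hCb
  refine ⟨Cb, |R₀| + |κ| + 1 + (κ^2+α^2) * (|T₂|+1)/α, hCb0, ?_⟩
  intro z him1 him2 hre1
  set ζ : ℂ := z / p with hζdef
  have hζp : ζ * p = z := div_mul_cancel₀ z hp0
  have hpζ : p * ζ = z := by rw [mul_comm]; exact hζp
  have huζ : u ζ = -z.im / α := by
    simp only [hudef, hζp]
    rw [div_neg, neg_div]
  have hζim : ζ.im = (α * z.re + κ * z.im)/(κ^2 + α^2) := by
    have hk2 : κ^2+α^2 ≠ 0 := by positivity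
    rw [hζdef, Complex.div_im]
    simp only [Complex.normSq_apply, hpre, hpim]
    field_simp [hk2]
    ring
  -- f ζ = F z
  have hkey : f ζ = F z := by
    rcases eq_or_lt_of_le him1 with heq | hlt
    · -- bottom boundary : z.im = -α
      have hu1 : u ζ = 1 := by rw [huζ, ← heq]; field_simp
      have hx : R₀ ≤ z.re - κ := by
        have h5 := le_abs_self R₀
        have h6 := le_abs_self κ
        have h7 : 0 ≤ (κ^2+α^2) * (|T₂|+1)/α := by positivity
        linarith
      have hzp : ((z.re - κ : ℝ) : ℂ) = z - p := by
        apply Complex.ext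
        · simp [hpre]
        · simp only [Complex.ofReal_im, Complex.sub_im, hpim]
          linarith [heq]
      have hBCz := hBC (z.re - κ) hx
      rw [hzp] at hBCz
      have hzpp : z - p + p = z := by ring
      rw [hzpp] at hBCz
      simp only [hfdef, hu1]
      rw [Int.floor_one]
      have : p * (ζ - ((1:ℤ):ℂ)) = z - p := by
        push_cast
        rw [mul_sub, hpζ, mul_one]
      rw [this]
      exact hBCz.symm
    · have hu0 : ⌊u ζ⌋ = 0 := by
        apply Int.floor_eq_iff.mpr
        constructor
        · rw [huζ]; push_cast; exact div_nonneg (by linarith) hα.le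
        · rw [huζ]; push_cast
          rw [div_lt_iff₀ hα]
          linarith
      simp only [hfdef, hu0]
      push_cast
      rw [sub_zero, hpζ]
  -- threshold
  have hT₂' : T₂ ≤ ζ.im := by
    have h1 : |z.im| ≤ α := abs_le.mpr ⟨by linarith, by linarith⟩
    have h2 : -(|κ| * α) ≤ κ * z.im := by
      have h3 : |κ * z.im| ≤ |κ| * α := by
        rw [abs_mul]
        exact mul_le_mul_of_nonneg_left h1 (abs_nonneg κ)
      linarith [neg_abs_le (κ * z.im)]
    rw [hζim, le_div_iff₀ (by positivity)]
    have has : (κ^2+α^2) * (|T₂|+1)/α * α = (κ^2+α^2)*(|T₂|+1) := by field_simp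
    have h4 := mul_le_mul_of_nonneg_left hre1 hα.le
    nlinarith [le_abs_self T₂, le_abs_self R₀, abs_nonneg R₀, abs_nonneg κ, abs_nonneg T₂,
      sq_nonneg κ, sq_nonneg α]
  have hbound := hT₂ ζ.im hT₂' ζ rfl
  rw [← hkey]
  calc ‖f ζ‖ ≤ Cb * ‖Real.exp (-2 * Real.pi * ζ.im / 1)‖ := hbound
    _ = Cb * Real.exp (-2 * Real.pi * (z / p).im) := by
        rw [div_one, Real.norm_eq_abs, Real.abs_exp]

end AuxDecay

set_option maxHeartbeats 2000000 in
/-- improved exponential decay at infinity.  If `Ξ` is holomorphic on `S_α`,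
continuous up to the boundary, satisfies the jump `Ξ₊(g(x) − iα) = Ξ₋(x) + G_Ξ(x)` with a
shift function `G_Ξ(x) = G^{(c)}(x) + 𝒢(x) − 𝒢(g(x) − iα)`, and has the `O(z⁻¹)` asymptotics
`Ξ(z) = C_Ξ δ_{±,−} + C_{−1}/z + O(z^{−2})` uniformly up to the boundary, then in fact
`Ξ(z) = −𝒢(z) + O(e^{−(2π/α)Re(γ̃₊z)})` as `Re z → +∞` and
`Ξ(z) = C_Ξ − 𝒢(z) + O(e^{(2π/α)Re(γ̃₋z)})` as `Re z → −∞`, uniformly up to the boundary. -/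
theorem improved_decay_at_infinity
    (α : ℝ) (hα : 0 < α) (κm κp M : ℝ) (hM : 0 < M)
    (g : ℝ → ℝ) (hg_smooth : ContDiff ℝ (⊤ : ℕ∞) g) (hg_mono : StrictMono g)
    (hg_surj : Function.Surjective g) (hg_deriv : ∀ x : ℝ, 0 < deriv g x)
    (hg_left : ∀ x : ℝ, x ≤ -M → g x = x + κm)
    (hg_right : ∀ x : ℝ, M ≤ x → g x = x + κp)
    -- the shift function data
    (Gc : ℝ → ℂ) (hGc : ContDiff ℝ (⊤ : ℕ∞) Gc)
    (hGcsupp : ∀ x : ℝ, x ∉ Set.Icc (-M) M → Gc x = 0)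
    (Gs : ℂ → ℂ) (hGs_smooth : ContDiffOn ℝ (⊤ : ℕ∞) Gs (closure (Strip α)))
    (hGs_hol : DifferentiableOn ℂ Gs (Strip α ∩ {z : ℂ | M / 2 < |z.re|}))
    (CG ϱ : ℝ) (hCG : 0 < CG) (hϱ : 0 < ϱ)
    (hGs_dec : ∀ z ∈ closure (Strip α), M / 2 < |z.re| →
      ‖Gs z‖ ≤ CG * Real.exp (-ϱ * |z.re|))
    -- the solution and its hypotheses
    (Ξ : ℂ → ℂ)
    (hΞ_hol : DifferentiableOn ℂ Ξ (Strip α))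
    (hΞ_cont : ContinuousOn Ξ (closure (Strip α)))
    (hjump : ∀ x : ℝ, Ξ ((g x : ℂ) - Complex.I * (α : ℂ))
      = Ξ (x : ℂ) + (Gc x + Gs (x : ℂ) - Gs ((g x : ℂ) - Complex.I * (α : ℂ))))
    (CΞ Cm1 : ℂ) (C X : ℝ) (hC : 0 < C)
    (hplus : ∀ z ∈ closure (Strip α), X ≤ z.re → ‖Ξ z - Cm1 / z‖ ≤ C / ‖z‖ ^ 2)
    (hminus : ∀ z ∈ closure (Strip α), z.re ≤ -X → ‖Ξ z - CΞ - Cm1 / z‖ ≤ C / ‖z‖ ^ 2) :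
    ∃ C' X' : ℝ, 0 < C' ∧
      (∀ z ∈ closure (Strip α), X' ≤ z.re →
        ‖Ξ z + Gs z‖ ≤ C' * Real.exp (-(2 * π / α) * (gamTilde α κp * z).re)) ∧
      (∀ z ∈ closure (Strip α), z.re ≤ -X' →
        ‖Ξ z - CΞ + Gs z‖ ≤ C' * Real.exp ((2 * π / α) * (gamTilde α κm * z).re)) := by
  have hα0 : α ≠ 0 := ne_of_gt hα
  -- closure of the strip
  have hstrip_open : IsOpen (Strip α) :=
    (isOpen_lt continuous_const Complex.continuous_im).inter
      (isOpen_lt Complex.continuous_im continuous_const)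
  have hclo : closure (Strip α) = {z : ℂ | -α ≤ z.im ∧ z.im ≤ 0} := by
    have h1 : Strip α = Complex.im ⁻¹' (Set.Ioo (-α) 0) := by
      ext z; simp [Strip, Set.mem_Ioo]
    rw [h1, Complex.closure_preimage_im, closure_Ioo (by linarith : -α ≠ 0)]
    ext z; simp [Set.mem_Icc]
  -- re/im helpers
  have hgam : ∀ (κ' : ℝ) (w : ℂ),
      (gamTilde α κ' * w).re = α * (w / ((κ':ℂ) - Complex.I*(α:ℂ))).im := by
    intro κ' w
    have h1 : gamTilde α κ' * w
        = -(Complex.I*(α:ℂ)) * (w / ((κ':ℂ) - Complex.I*(α:ℂ))) := by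
      rw [gamTilde]; ring
    rw [h1]
    simp [Complex.mul_re, Complex.mul_im]
  have hexp_eq : ∀ (κ' : ℝ) (w : ℂ),
      -(2 * π / α) * (gamTilde α κ' * w).re
        = -2 * π * (w / ((κ':ℂ) - Complex.I*(α:ℂ))).im := by
    intro κ' w
    rw [hgam]
    field_simp
  -- norms vs re
  have hre_le_norm : ∀ z : ℂ, z.re ≤ ‖z‖ :=
    fun z => le_trans (le_abs_self _) (Complex.abs_re_le_norm z)
  ------------------------------------------------------------------
  -- RIGHT SIDE
  ------------------------------------------------------------------
  have hplusres : ∃ C₁ X₁ : ℝ, 0 < C₁ ∧ ∀ z : ℂ, -α ≤ z.im → z.im ≤ 0 → X₁ ≤ z.re →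
      ‖Ξ z + Gs z‖ ≤ C₁ * Real.exp (-2 * π * (z / ((κp:ℂ) - Complex.I*(α:ℂ))).im) := by
    set R₀ : ℝ := |M| + |X| + 1 with hR₀def
    have hR₀M : M ≤ R₀ := by
      have := le_abs_self M; have := abs_nonneg X; linarith
    have hR₀X : X ≤ R₀ := by
      have := le_abs_self X; have := abs_nonneg M; linarith
    have hMle : M/2 < R₀ := by linarith
    apply halfplane_exp_decay α κp R₀ hα (fun z => Ξ z + Gs z)
    · -- continuity
      apply ContinuousOn.add
      · apply hΞ_cont.mono
        intro z hz
        rw [hclo]; exact ⟨hz.1, hz.2.1⟩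
      · apply (hGs_smooth.continuousOn).mono
        intro z hz
        rw [hclo]; exact ⟨hz.1, hz.2.1⟩
    · -- differentiability
      intro z h1 h2 h3
      have hzs : z ∈ Strip α := ⟨h1, h2⟩
      have habs : M/2 < |z.re| := by
        rw [abs_of_pos (by linarith : (0:ℝ) < z.re)]; linarith
      apply DifferentiableAt.add
      · exact hΞ_hol.differentiableAt (hstrip_open.mem_nhds hzs)
      · apply hGs_hol.differentiableAt
        apply IsOpen.mem_nhds
        · exact hstrip_open.inter (isOpen_lt continuous_const (by fun_prop))
        · exact ⟨hzs, habs⟩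
    · -- boundary condition
      intro x hx
      have hxM : M ≤ x := le_trans hR₀M hx
      have hgx : g x = x + κp := hg_right x hxM
      have hR₀M' : M < R₀ := by
        have := le_abs_self M; have := abs_nonneg X; linarith
      have hGcx : Gc x = 0 := hGcsupp x (by
        intro h; rw [Set.mem_Icc] at h; linarith [h.2])
      have hj := hjump x
      rw [hgx, hGcx] at hj
      have hcast : ((x + κp : ℝ) : ℂ) - Complex.I*(α:ℂ)
          = (x:ℂ) + ((κp:ℂ) - Complex.I*(α:ℂ)) := by push_cast; ring
      rw [hcast] at hj
      linear_combination hj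
    · -- decay
      intro ε hε
      refine ⟨max (max (R₀ + 1) (2*(C+‖Cm1‖)/ε + 1)) (Real.log (2*CG/ε)/ϱ), ?_⟩
      intro z h1 h2 h3
      have hR1 : R₀ + 1 ≤ z.re := le_trans (le_trans (le_max_left _ _) (le_max_left _ _)) h3
      have hR2 : 2*(C+‖Cm1‖)/ε + 1 ≤ z.re :=
        le_trans (le_trans (le_max_right _ _) (le_max_left _ _)) h3
      have hR3 : Real.log (2*CG/ε)/ϱ ≤ z.re := le_trans (le_max_right _ _) h3
      have hzc : z ∈ closure (Strip α) := by rw [hclo]; exact ⟨h1, h2⟩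
      have hzre : (0:ℝ) < z.re := by
        have := abs_nonneg M; have := abs_nonneg X; linarith
      have hznorm : z.re ≤ ‖z‖ := hre_le_norm z
      have hznorm1 : 1 ≤ ‖z‖ := by
        have := le_abs_self M; have := abs_nonneg X; linarith
      have hz0 : (0:ℝ) < ‖z‖ := by linarith
      -- bound on Ξ
      have hXi : ‖Ξ z‖ ≤ (C + ‖Cm1‖) / ‖z‖ := by
        have hp := hplus z hzc (by linarith)
        have h4 : ‖Ξ z‖ ≤ ‖Ξ z - Cm1/z‖ + ‖Cm1/z‖ := by
          calc ‖Ξ z‖ = ‖(Ξ z - Cm1/z) + Cm1/z‖ := by ring_nf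
            _ ≤ _ := norm_add_le _ _
        have h5 : ‖Cm1/z‖ = ‖Cm1‖/‖z‖ := norm_div _ _
        have h6 : C / ‖z‖^2 ≤ C / ‖z‖ := by
          apply div_le_div_of_nonneg_left hC.le hz0
          nlinarith
        rw [h5] at h4
        have := add_div C ‖Cm1‖
        calc ‖Ξ z‖ ≤ ‖Ξ z - Cm1/z‖ + ‖Cm1‖/‖z‖ := h4
          _ ≤ C/‖z‖^2 + ‖Cm1‖/‖z‖ := by linarith [hp]
          _ ≤ C/‖z‖ + ‖Cm1‖/‖z‖ := by linarith [h6]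
          _ = (C + ‖Cm1‖)/‖z‖ := by rw [← add_div]
      have hXi2 : ‖Ξ z‖ ≤ ε/2 := by
        have h7 : 2*(C+‖Cm1‖)/ε ≤ ‖z‖ := by linarith
        calc ‖Ξ z‖ ≤ (C + ‖Cm1‖) / ‖z‖ := hXi
          _ ≤ ε/2 := by
            rw [div_le_iff₀ hz0]
            rw [div_le_iff₀ hε] at h7
            nlinarith
      -- bound on Gs
      have hGs2 : ‖Gs z‖ ≤ ε/2 := by
        have habs : M/2 < |z.re| := by rw [abs_of_pos hzre]; linarith
        have h8 := hGs_dec z hzc habs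
        have h9 : Real.exp (-ϱ * |z.re|) ≤ ε/(2*CG) := by
          rw [abs_of_pos hzre]
          have h10 : Real.log (2*CG/ε) ≤ ϱ * z.re := by
            rw [div_le_iff₀ hϱ] at hR3
            calc Real.log (2*CG/ε) ≤ z.re * ϱ := hR3
              _ = ϱ * z.re := mul_comm _ _
          have h11 : Real.exp (-ϱ * z.re) ≤ Real.exp (-(Real.log (2*CG/ε))) := by
            apply Real.exp_le_exp.mpr; linarith
          have h12 : Real.exp (-(Real.log (2*CG/ε))) = ε/(2*CG) := by
            rw [Real.exp_neg, Real.exp_log (by positivity)]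
            field_simp
          linarith
        calc ‖Gs z‖ ≤ CG * Real.exp (-ϱ * |z.re|) := h8
          _ ≤ CG * (ε/(2*CG)) := mul_le_mul_of_nonneg_left h9 hCG.le
          _ = ε/2 := by field_simp
      calc ‖Ξ z + Gs z‖ ≤ ‖Ξ z‖ + ‖Gs z‖ := norm_add_le _ _
        _ ≤ ε := by linarith
  ------------------------------------------------------------------
  -- LEFT SIDE
  ------------------------------------------------------------------
  have hminusres : ∃ C₂ X₂ : ℝ, 0 < C₂ ∧ ∀ z : ℂ, -α ≤ z.im → z.im ≤ 0 → X₂ ≤ z.re →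
      ‖Ξ (-z - Complex.I*(α:ℂ)) - CΞ + Gs (-z - Complex.I*(α:ℂ))‖
        ≤ C₂ * Real.exp (-2 * π * (z / ((κm:ℂ) - Complex.I*(α:ℂ))).im) := by
    set R₀ : ℝ := |M| + |X| + |κm| + 1 with hR₀def
    have hR₀M : M < R₀ := by
      have := le_abs_self M; have := abs_nonneg X; have := abs_nonneg κm; linarith
    have hR₀X : X ≤ R₀ := by
      have := le_abs_self X; have := abs_nonneg M; have := abs_nonneg κm; linarith
    have hwim : ∀ z : ℂ, (-z - Complex.I*(α:ℂ)).im = -z.im - α := by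
      intro z; simp
    have hwre : ∀ z : ℂ, (-z - Complex.I*(α:ℂ)).re = -z.re := by
      intro z; simp
    have hmapcl : ∀ z : ℂ, -α ≤ z.im → z.im ≤ 0 → (-z - Complex.I*(α:ℂ)) ∈ closure (Strip α) := by
      intro z h1 h2
      rw [hclo]
      constructor
      · rw [hwim]; linarith
      · rw [hwim]; linarith
    apply halfplane_exp_decay α κm R₀ hα
        (fun z => Ξ (-z - Complex.I*(α:ℂ)) - CΞ + Gs (-z - Complex.I*(α:ℂ)))
    · -- continuity
      have hcm : Continuous (fun z : ℂ => -z - Complex.I*(α:ℂ)) := by fun_prop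
      have hmt : MapsTo (fun z : ℂ => -z - Complex.I*(α:ℂ))
          {w : ℂ | -α ≤ w.im ∧ w.im ≤ 0 ∧ R₀ ≤ w.re} (closure (Strip α)) := by
        intro z hz; exact hmapcl z hz.1 hz.2.1
      exact ((hΞ_cont.comp hcm.continuousOn hmt).sub continuousOn_const).add
        ((hGs_smooth.continuousOn).comp hcm.continuousOn hmt)
    · -- differentiability
      intro z h1 h2 h3
      have hzre : (0:ℝ) < z.re := by
        have := abs_nonneg M; have := abs_nonneg X; have := abs_nonneg κm; linarith
      have hws : (-z - Complex.I*(α:ℂ)) ∈ Strip α := by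
        constructor
        · rw [hwim]; linarith
        · rw [hwim]; linarith
      have habs : M/2 < |(-z - Complex.I*(α:ℂ)).re| := by
        rw [hwre, abs_neg, abs_of_pos hzre]
        have := le_abs_self M
        linarith
      have hh : DifferentiableAt ℂ (fun z : ℂ => -z - Complex.I*(α:ℂ)) z := by fun_prop
      have hXiw : DifferentiableAt ℂ Ξ (-z - Complex.I*(α:ℂ)) :=
        hΞ_hol.differentiableAt (hstrip_open.mem_nhds hws)
      have hGsw : DifferentiableAt ℂ Gs (-z - Complex.I*(α:ℂ)) := by
        apply hGs_hol.differentiableAt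
        apply IsOpen.mem_nhds
        · exact hstrip_open.inter (isOpen_lt continuous_const (by fun_prop))
        · exact ⟨hws, habs⟩
      exact ((hXiw.comp z hh).sub (differentiableAt_const CΞ)).add (hGsw.comp z hh)
    · -- boundary condition
      intro x hx
      set y : ℝ := -x - κm with hydef
      have hyM : y < -M := by
        have h5 := le_abs_self M; have h6 := abs_nonneg X; have h8 := neg_abs_le κm
        simp only [hydef]
        linarith
      have hgy : g y = -x := by rw [hg_left y hyM.le, hydef]; ring
      have hGcy : Gc y = 0 := hGcsupp y (by
        intro h; rw [Set.mem_Icc] at h; linarith [h.1, hyM, hM])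
      have hj := hjump y
      rw [hgy, hGcy] at hj
      have hcasty : ((y:ℝ):ℂ) = -(x:ℂ) - (κm:ℂ) := by rw [hydef]; push_cast; ring
      have hcastx : ((-x : ℝ):ℂ) = -(x:ℂ) := by push_cast; ring
      rw [hcastx, hcasty] at hj
      have harg : -((x:ℂ) + ((κm:ℂ) - Complex.I*(α:ℂ))) - Complex.I*(α:ℂ)
          = -(x:ℂ) - (κm:ℂ) := by ring
      show Ξ (-((x:ℂ) + ((κm:ℂ) - Complex.I*(α:ℂ))) - Complex.I*(α:ℂ)) - CΞ
          + Gs (-((x:ℂ) + ((κm:ℂ) - Complex.I*(α:ℂ))) - Complex.I*(α:ℂ))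
          = Ξ (-(x:ℂ) - Complex.I*(α:ℂ)) - CΞ + Gs (-(x:ℂ) - Complex.I*(α:ℂ))
      rw [harg]
      linear_combination -hj
    · -- decay
      intro ε hε
      refine ⟨max (max (R₀ + 1) (2*(C+‖Cm1‖)/ε + 1)) (Real.log (2*CG/ε)/ϱ), ?_⟩
      intro z h1 h2 h3
      have hR1 : R₀ + 1 ≤ z.re := le_trans (le_trans (le_max_left _ _) (le_max_left _ _)) h3
      have hR2 : 2*(C+‖Cm1‖)/ε + 1 ≤ z.re :=
        le_trans (le_trans (le_max_right _ _) (le_max_left _ _)) h3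
      have hR3 : Real.log (2*CG/ε)/ϱ ≤ z.re := le_trans (le_max_right _ _) h3
      set w : ℂ := -z - Complex.I*(α:ℂ) with hwdef
      have hwc : w ∈ closure (Strip α) := hmapcl z h1 h2
      have hzre : (0:ℝ) < z.re := by
        have := abs_nonneg M; have := abs_nonneg X; have := abs_nonneg κm; linarith
      have hwre' : w.re = -z.re := hwre z
      have hwnorm : z.re ≤ ‖w‖ := by
        have h4 : |w.re| ≤ ‖w‖ := Complex.abs_re_le_norm w
        rw [hwre', abs_neg, abs_of_pos hzre] at h4
        exact h4
      have hwnorm1 : 1 ≤ ‖w‖ := by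
        have := le_abs_self M; have := abs_nonneg X; have := abs_nonneg κm; linarith
      have hw0 : (0:ℝ) < ‖w‖ := by linarith
      have hXw : w.re ≤ -X := by rw [hwre']; linarith
      have hXi : ‖Ξ w - CΞ‖ ≤ (C + ‖Cm1‖) / ‖w‖ := by
        have hp := hminus w hwc hXw
        have h4 : ‖Ξ w - CΞ‖ ≤ ‖Ξ w - CΞ - Cm1/w‖ + ‖Cm1/w‖ := by
          calc ‖Ξ w - CΞ‖ = ‖(Ξ w - CΞ - Cm1/w) + Cm1/w‖ := by ring_nf
            _ ≤ _ := norm_add_le _ _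
        have h5 : ‖Cm1/w‖ = ‖Cm1‖/‖w‖ := norm_div _ _
        have h6 : C / ‖w‖^2 ≤ C / ‖w‖ := by
          apply div_le_div_of_nonneg_left hC.le hw0
          nlinarith
        rw [h5] at h4
        calc ‖Ξ w - CΞ‖ ≤ ‖Ξ w - CΞ - Cm1/w‖ + ‖Cm1‖/‖w‖ := h4
          _ ≤ C/‖w‖^2 + ‖Cm1‖/‖w‖ := by linarith [hp]
          _ ≤ C/‖w‖ + ‖Cm1‖/‖w‖ := by linarith [h6]
          _ = (C + ‖Cm1‖)/‖w‖ := by rw [← add_div]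
      have hXi2 : ‖Ξ w - CΞ‖ ≤ ε/2 := by
        have h7 : 2*(C+‖Cm1‖)/ε ≤ ‖w‖ := by linarith
        calc ‖Ξ w - CΞ‖ ≤ (C + ‖Cm1‖) / ‖w‖ := hXi
          _ ≤ ε/2 := by
            rw [div_le_iff₀ hw0]
            rw [div_le_iff₀ hε] at h7
            nlinarith
      have hGs2 : ‖Gs w‖ ≤ ε/2 := by
        have habs : M/2 < |w.re| := by
          rw [hwre', abs_neg, abs_of_pos hzre]
          have := le_abs_self M
          linarith
        have h8 := hGs_dec w hwc habs
        have h9 : Real.exp (-ϱ * |w.re|) ≤ ε/(2*CG) := by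
          rw [hwre', abs_neg, abs_of_pos hzre]
          have h10 : Real.log (2*CG/ε) ≤ ϱ * z.re := by
            rw [div_le_iff₀ hϱ] at hR3
            calc Real.log (2*CG/ε) ≤ z.re * ϱ := hR3
              _ = ϱ * z.re := mul_comm _ _
          have h11 : Real.exp (-ϱ * z.re) ≤ Real.exp (-(Real.log (2*CG/ε))) := by
            apply Real.exp_le_exp.mpr; linarith
          have h12 : Real.exp (-(Real.log (2*CG/ε))) = ε/(2*CG) := by
            rw [Real.exp_neg, Real.exp_log (by positivity)]
            field_simp
          linarith
        calc ‖Gs w‖ ≤ CG * Real.exp (-ϱ * |w.re|) := h8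
          _ ≤ CG * (ε/(2*CG)) := mul_le_mul_of_nonneg_left h9 hCG.le
          _ = ε/2 := by field_simp
      calc ‖Ξ w - CΞ + Gs w‖ ≤ ‖Ξ w - CΞ‖ + ‖Gs w‖ := norm_add_le _ _
        _ ≤ ε := by linarith
  ------------------------------------------------------------------
  -- ASSEMBLY
  ------------------------------------------------------------------
  obtain ⟨C₁, X₁, hC₁, hres₁⟩ := hplusres
  obtain ⟨C₂, X₂, hC₂, hres₂⟩ := hminusres
  set e₀ : ℝ := Real.exp (2 * π * ((Complex.I*(α:ℂ)) / ((κm:ℂ) - Complex.I*(α:ℂ))).im)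
    with he₀def
  have he₀ : 0 < e₀ := Real.exp_pos _
  refine ⟨max C₁ (C₂ * e₀), max X₁ X₂, lt_max_iff.mpr (Or.inl hC₁), ?_, ?_⟩
  · -- right conclusion
    intro z hz hXz
    rw [hclo] at hz
    have hb := hres₁ z hz.1 hz.2 (le_trans (le_max_left _ _) hXz)
    calc ‖Ξ z + Gs z‖ ≤ C₁ * Real.exp (-2 * π * (z / ((κp:ℂ) - Complex.I*(α:ℂ))).im) := hb
      _ = C₁ * Real.exp (-(2 * π / α) * (gamTilde α κp * z).re) := by rw [hexp_eq κp z]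
      _ ≤ max C₁ (C₂ * e₀) * Real.exp (-(2 * π / α) * (gamTilde α κp * z).re) :=
          mul_le_mul_of_nonneg_right (le_max_left _ _) (Real.exp_pos _).le
  · -- left conclusion
    intro w hw hXw
    rw [hclo] at hw
    set z : ℂ := -w - Complex.I*(α:ℂ) with hzdef
    have hz1 : -α ≤ z.im := by
      have : z.im = -w.im - α := by rw [hzdef]; simp
      rw [this]; linarith [hw.2]
    have hz2 : z.im ≤ 0 := by
      have : z.im = -w.im - α := by rw [hzdef]; simp
      rw [this]; linarith [hw.1]
    have hz3 : X₂ ≤ z.re := by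
      have : z.re = -w.re := by rw [hzdef]; simp
      have h2 : X₂ ≤ max X₁ X₂ := le_max_right _ _
      rw [this]; linarith
    have hb := hres₂ z hz1 hz2 hz3
    have hF : -z - Complex.I*(α:ℂ) = w := by rw [hzdef]; ring
    rw [hF] at hb
    have hsplit : (z / ((κm:ℂ) - Complex.I*(α:ℂ))).im
        = -((w / ((κm:ℂ) - Complex.I*(α:ℂ))).im)
          - ((Complex.I*(α:ℂ)) / ((κm:ℂ) - Complex.I*(α:ℂ))).im := by
      rw [hzdef]
      rw [sub_div, neg_div, Complex.sub_im, Complex.neg_im]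
    have hgw : (2 * π / α) * (gamTilde α κm * w).re
        = 2 * π * ((w / ((κm:ℂ) - Complex.I*(α:ℂ))).im) := by
      have := hexp_eq κm w
      linarith
    have hexp2 : Real.exp (-2 * π * (z / ((κm:ℂ) - Complex.I*(α:ℂ))).im)
        = Real.exp ((2 * π / α) * (gamTilde α κm * w).re) * e₀ := by
      rw [he₀def, ← Real.exp_add, hsplit, hgw]
      congr 1
      ring
    calc ‖Ξ w - CΞ + Gs w‖
        ≤ C₂ * Real.exp (-2 * π * (z / ((κm:ℂ) - Complex.I*(α:ℂ))).im) := hb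
      _ = (C₂ * e₀) * Real.exp ((2 * π / α) * (gamTilde α κm * w).re) := by
          rw [hexp2]; ring
      _ ≤ max C₁ (C₂ * e₀) * Real.exp ((2 * π / α) * (gamTilde α κm * w).re) :=
          mul_le_mul_of_nonneg_right (le_max_right _ _) (Real.exp_pos _).le

end
end

section
/- The limits α₀ = lim_{k→0, k≠0} α↑(k)/k and α̃₀ = lim_{k→0, k≠0} k·α↓(k) exist and equal α₀ = −iπ·√(2AB) and α̃₀ = −i/(π·√(2AB)) (principal square root); in particular α₀·α̃₀ = −1. -/
open MeasureTheory Real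

noncomputable section

/-- `A = (α + iκ)/(2π)`. -/
def Acst (α κ : ℝ) : ℂ := ((α : ℂ) + Complex.I * (κ : ℂ)) / (2 * (π : ℂ))

/-- `B = (τ − α − iκ)/(2π)`. -/
def Bcst (τ α κ : ℝ) : ℂ := ((τ : ℂ) - (α : ℂ) - Complex.I * (κ : ℂ)) / (2 * (π : ℂ))

/-- `C = τ/(2π)`. -/
def Ccst (τ : ℝ) : ℂ := (τ : ℂ) / (2 * (π : ℂ))

/-- The Wiener–Hopf factor `α↑`. -/
def aup (τ α κ : ℝ) (k : ℂ) : ℂ :=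
  -Complex.I * k * (2 * (π : ℂ) * Acst α κ * Bcst τ α κ) ^ ((1 : ℂ) / 2) *
    Ccst τ ^ (Complex.I * k * Ccst τ) *
    Acst α κ ^ (-(Complex.I * k * Acst α κ)) *
    Bcst τ α κ ^ (-(Complex.I * k * Bcst τ α κ)) *
    Complex.Gamma (1 / 2 - Complex.I * Ccst τ * k) /
    (Complex.Gamma (1 - Complex.I * Bcst τ α κ * k) *
      Complex.Gamma (1 - Complex.I * Acst α κ * k))

/-- The Wiener–Hopf factor `α↓`. -/
def adown (τ α κ : ℝ) (k : ℂ) : ℂ :=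
  Complex.I * k * (Acst α κ * Bcst τ α κ / (2 * (π : ℂ))) ^ ((1 : ℂ) / 2) *
    Ccst τ ^ (Complex.I * k * Ccst τ) *
    Acst α κ ^ (-(Complex.I * k * Acst α κ)) *
    Bcst τ α κ ^ (-(Complex.I * k * Bcst τ α κ)) *
    Complex.Gamma (Complex.I * Acst α κ * k) * Complex.Gamma (Complex.I * Bcst τ α κ * k) /
    Complex.Gamma (1 / 2 + Complex.I * Ccst τ * k)

private lemma ofReal_mul_cpow {r : ℝ} (hr : 0 < r) (z w : ℂ) :
    ((r : ℂ) * z) ^ w = (r : ℂ) ^ w * z ^ w := by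
  rcases eq_or_ne z 0 with rfl | hz
  · rcases eq_or_ne w 0 with rfl | hw
    · simp
    · simp [Complex.zero_cpow hw]
  · have hr' : (r : ℂ) ≠ 0 := Complex.ofReal_ne_zero.2 hr.ne'
    rw [Complex.cpow_def_of_ne_zero (mul_ne_zero hr' hz),
        Complex.cpow_def_of_ne_zero hr', Complex.cpow_def_of_ne_zero hz,
        Complex.log_ofReal_mul hr hz, Complex.ofReal_log hr.le, add_mul, Complex.exp_add]

private lemma cpow_half_ofReal {r : ℝ} (hr : 0 ≤ r) :
    (r : ℂ) ^ ((1 : ℂ) / 2) = ((Real.sqrt r : ℝ) : ℂ) := by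
  rw [show ((1 : ℂ) / 2) = (((1 / 2 : ℝ)) : ℂ) by norm_num, ← Complex.ofReal_cpow hr,
    Real.sqrt_eq_rpow]

private lemma gammaContAt {z : ℂ} (hz : 0 < z.re) : ContinuousAt Complex.Gamma z := by
  refine (Complex.differentiableAt_Gamma z fun m h => ?_).continuousAt
  rw [h] at hz
  simp at hz
  linarith [Nat.cast_nonneg (α := ℝ) m]

/-- `α₀ = lim_{k→0} α↑(k)/k = −iπ√(2AB)` and
`α̃₀ = lim_{k→0} k·α↓(k) = −i/(π√(2AB))`; in particular `α₀·α̃₀ = −1`. -/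
theorem wiener_hopf_factors_zero_limits
    (τ α κ : ℝ) (hα : 0 < α) (hτ : α < τ) :
    Filter.Tendsto (fun k : ℂ => aup τ α κ k / k) (nhdsWithin 0 {(0 : ℂ)}ᶜ)
      (nhds (-Complex.I * (π : ℂ) * (2 * Acst α κ * Bcst τ α κ) ^ ((1 : ℂ) / 2))) ∧
    Filter.Tendsto (fun k : ℂ => k * adown τ α κ k) (nhdsWithin 0 {(0 : ℂ)}ᶜ)
      (nhds (-Complex.I / ((π : ℂ) * (2 * Acst α κ * Bcst τ α κ) ^ ((1 : ℂ) / 2)))) ∧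
    (-Complex.I * (π : ℂ) * (2 * Acst α κ * Bcst τ α κ) ^ ((1 : ℂ) / 2)) *
        (-Complex.I / ((π : ℂ) * (2 * Acst α κ * Bcst τ α κ) ^ ((1 : ℂ) / 2))) = -1 := by
  have hπ : (0 : ℝ) < π := Real.pi_pos
  have hπ' : ((π : ℝ) : ℂ) ≠ 0 := Complex.ofReal_ne_zero.2 hπ.ne'
  have h2π : (2 * (π : ℂ)) ≠ 0 := mul_ne_zero two_ne_zero hπ'
  set A := Acst α κ with hAdef
  set B := Bcst τ α κ with hBdef
  set C := Ccst τ with hCdef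
  have hA : A ≠ 0 := by
    rw [hAdef, Acst, div_ne_zero_iff]
    refine ⟨fun h => ?_, h2π⟩
    have := congrArg Complex.re h
    simp at this
    exact hα.ne' this
  have hB : B ≠ 0 := by
    rw [hBdef, Bcst, div_ne_zero_iff]
    refine ⟨fun h => ?_, h2π⟩
    have := congrArg Complex.re h
    simp at this
    linarith
  have hC : C ≠ 0 := by
    rw [hCdef, Ccst, div_ne_zero_iff]
    exact ⟨Complex.ofReal_ne_zero.2 (by linarith), h2π⟩
  have hAB : A * B ≠ 0 := mul_ne_zero hA hB
  -- the square roots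
  set w : ℂ := (A * B) ^ ((1 : ℂ) / 2) with hwdef
  have hw : w ≠ 0 := by
    rw [hwdef]
    intro h
    rw [Complex.cpow_eq_zero_iff] at h
    exact hAB h.1
  have hww : w * w = A * B := by
    rw [hwdef, ← Complex.cpow_add _ _ hAB]
    norm_num
  set s : ℂ := (2 * A * B) ^ ((1 : ℂ) / 2) with hsdef
  have hs2 : (2 : ℂ) * A * B = ((2 : ℝ) : ℂ) * (A * B) := by push_cast; ring
  have hsw : s = ((Real.sqrt 2 : ℝ) : ℂ) * w := by
    rw [hsdef, hs2, ofReal_mul_cpow (by norm_num) _ _, cpow_half_ofReal (by norm_num), hwdef]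
  have hsqrt2 : (0 : ℝ) < Real.sqrt 2 := Real.sqrt_pos.2 (by norm_num)
  have hsqrtπ : (0 : ℝ) < Real.sqrt π := Real.sqrt_pos.2 hπ
  have hs : s ≠ 0 := by
    rw [hsw]
    exact mul_ne_zero (Complex.ofReal_ne_zero.2 hsqrt2.ne') hw
  -- Part 3
  have part3 : (-Complex.I * (π : ℂ) * s) * (-Complex.I / ((π : ℂ) * s)) = -1 := by
    have hπs : (π : ℂ) * s ≠ 0 := mul_ne_zero hπ' hs
    field_simp
    linear_combination Complex.I_mul_I
  -- Part 1
  have key1 : ∀ k : ℂ, k ≠ 0 → aup τ α κ k / k =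
      -Complex.I * (2 * (π : ℂ) * A * B) ^ ((1 : ℂ) / 2) * C ^ (Complex.I * k * C) *
        A ^ (-(Complex.I * k * A)) * B ^ (-(Complex.I * k * B)) *
        Complex.Gamma (1 / 2 - Complex.I * C * k) /
        (Complex.Gamma (1 - Complex.I * B * k) * Complex.Gamma (1 - Complex.I * A * k)) := by
    intro k hk
    rw [aup, ← hAdef, ← hBdef, ← hCdef, div_div,
      show -Complex.I * k * (2 * (π : ℂ) * A * B) ^ ((1 : ℂ) / 2) * C ^ (Complex.I * k * C) *
          A ^ (-(Complex.I * k * A)) * B ^ (-(Complex.I * k * B)) *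
          Complex.Gamma (1 / 2 - Complex.I * C * k) =
        (-Complex.I * (2 * (π : ℂ) * A * B) ^ ((1 : ℂ) / 2) * C ^ (Complex.I * k * C) *
          A ^ (-(Complex.I * k * A)) * B ^ (-(Complex.I * k * B)) *
          Complex.Gamma (1 / 2 - Complex.I * C * k)) * k from by ring,
      mul_div_mul_comm, div_self hk, mul_one]
  have h1 : Filter.Tendsto (fun k : ℂ =>
      -Complex.I * (2 * (π : ℂ) * A * B) ^ ((1 : ℂ) / 2) * C ^ (Complex.I * k * C) *
        A ^ (-(Complex.I * k * A)) * B ^ (-(Complex.I * k * B)) *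
        Complex.Gamma (1 / 2 - Complex.I * C * k) /
        (Complex.Gamma (1 - Complex.I * B * k) * Complex.Gamma (1 - Complex.I * A * k)))
      (nhds 0) (nhds (-Complex.I * (π : ℂ) * s)) := by
    have hCp : ContinuousAt (fun k : ℂ => C ^ (Complex.I * k * C)) 0 :=
      (continuousAt_const_cpow hC).comp (by fun_prop)
    have hAp : ContinuousAt (fun k : ℂ => A ^ (-(Complex.I * k * A))) 0 :=
      (continuousAt_const_cpow hA).comp (by fun_prop)
    have hBp : ContinuousAt (fun k : ℂ => B ^ (-(Complex.I * k * B))) 0 :=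
      (continuousAt_const_cpow hB).comp (by fun_prop)
    have hG1 : ContinuousAt (fun k : ℂ => Complex.Gamma (1 / 2 - Complex.I * C * k)) 0 := by
      have h : ContinuousAt Complex.Gamma ((fun k : ℂ => 1 / 2 - Complex.I * C * k) 0) := by
        simp only [mul_zero, sub_zero]
        exact gammaContAt (by norm_num [Complex.div_re])
      exact ContinuousAt.comp (x := (0:ℂ)) h (by fun_prop)
    have hG2 : ContinuousAt (fun k : ℂ => Complex.Gamma (1 - Complex.I * B * k)) 0 := by
      have h : ContinuousAt Complex.Gamma ((fun k : ℂ => 1 - Complex.I * B * k) 0) := by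
        simp only [mul_zero, sub_zero]
        exact gammaContAt (by norm_num)
      exact ContinuousAt.comp (x := (0:ℂ)) h (by fun_prop)
    have hG3 : ContinuousAt (fun k : ℂ => Complex.Gamma (1 - Complex.I * A * k)) 0 := by
      have h : ContinuousAt Complex.Gamma ((fun k : ℂ => 1 - Complex.I * A * k) 0) := by
        simp only [mul_zero, sub_zero]
        exact gammaContAt (by norm_num)
      exact ContinuousAt.comp (x := (0:ℂ)) h (by fun_prop)
    have hden : Complex.Gamma (1 - Complex.I * B * (0 : ℂ)) *
        Complex.Gamma (1 - Complex.I * A * (0 : ℂ)) ≠ 0 := by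
      simp [Complex.Gamma_one]
    have hc : ContinuousAt (fun k : ℂ =>
        -Complex.I * (2 * (π : ℂ) * A * B) ^ ((1 : ℂ) / 2) * C ^ (Complex.I * k * C) *
          A ^ (-(Complex.I * k * A)) * B ^ (-(Complex.I * k * B)) *
          Complex.Gamma (1 / 2 - Complex.I * C * k) /
          (Complex.Gamma (1 - Complex.I * B * k) * Complex.Gamma (1 - Complex.I * A * k))) 0 :=
      ((((continuousAt_const.mul hCp).mul hAp).mul hBp).mul hG1).div (hG2.mul hG3) hden
    have hval : -Complex.I * (2 * (π : ℂ) * A * B) ^ ((1 : ℂ) / 2) *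
        C ^ (Complex.I * (0 : ℂ) * C) * A ^ (-(Complex.I * (0 : ℂ) * A)) *
        B ^ (-(Complex.I * (0 : ℂ) * B)) *
        Complex.Gamma (1 / 2 - Complex.I * C * 0) /
        (Complex.Gamma (1 - Complex.I * B * 0) * Complex.Gamma (1 - Complex.I * A * 0)) =
        -Complex.I * (π : ℂ) * s := by
      have hbase : (2 : ℂ) * (π : ℂ) * A * B = ((2 * π : ℝ) : ℂ) * (A * B) := by
        push_cast; ring
      have hX : ((2 : ℂ) * (π : ℂ) * A * B) ^ ((1 : ℂ) / 2) =
          ((Real.sqrt (2 * π) : ℝ) : ℂ) * w := by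
        rw [hbase, ofReal_mul_cpow (by positivity) _ _,
          cpow_half_ofReal (by positivity), hwdef]
      have hr : Real.sqrt (2 * π) * Real.sqrt π = π * Real.sqrt 2 := by
        rw [Real.sqrt_mul (by norm_num : (0 : ℝ) ≤ 2), mul_assoc,
          Real.mul_self_sqrt hπ.le]
        ring
      have hr' : ((Real.sqrt (2 * π) : ℝ) : ℂ) * ((Real.sqrt π : ℝ) : ℂ) =
          ((π : ℝ) : ℂ) * ((Real.sqrt 2 : ℝ) : ℂ) := by
        have := congrArg (fun x : ℝ => (x : ℂ)) hr
        push_cast at this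
        exact this
      simp only [mul_zero, zero_mul, neg_zero, Complex.cpow_zero, mul_one, sub_zero,
        Complex.Gamma_one, one_mul, div_one]
      rw [hX, Complex.Gamma_one_half_eq, cpow_half_ofReal hπ.le, hsw]
      linear_combination (-Complex.I * w) * hr'
    exact hval ▸ hc.tendsto
  -- Part 2
  have key2 : ∀ k : ℂ, k ≠ 0 → k * adown τ α κ k =
      Complex.I * (A * B / (2 * (π : ℂ))) ^ ((1 : ℂ) / 2) * C ^ (Complex.I * k * C) *
        A ^ (-(Complex.I * k * A)) * B ^ (-(Complex.I * k * B)) *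
        Complex.Gamma (Complex.I * A * k + 1) * Complex.Gamma (Complex.I * B * k + 1) /
        ((Complex.I * A) * (Complex.I * B) * Complex.Gamma (1 / 2 + Complex.I * C * k)) := by
    intro k hk
    have hzA : Complex.I * A * k ≠ 0 := mul_ne_zero (mul_ne_zero Complex.I_ne_zero hA) hk
    have hzB : Complex.I * B * k ≠ 0 := mul_ne_zero (mul_ne_zero Complex.I_ne_zero hB) hk
    have eA : Complex.Gamma (Complex.I * A * k) =
        Complex.Gamma (Complex.I * A * k + 1) / (Complex.I * A * k) := by
      rw [Complex.Gamma_add_one _ hzA, mul_div_cancel_left₀ _ hzA]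
    have eB : Complex.Gamma (Complex.I * B * k) =
        Complex.Gamma (Complex.I * B * k + 1) / (Complex.I * B * k) := by
      rw [Complex.Gamma_add_one _ hzB, mul_div_cancel_left₀ _ hzB]
    rw [adown, ← hAdef, ← hBdef, ← hCdef, eA, eB, ← mul_div_assoc]
    rcases eq_or_ne (Complex.Gamma (1 / 2 + Complex.I * C * k)) 0 with h0 | h0
    · rw [h0]
      simp
    · rw [div_eq_div_iff h0 (mul_ne_zero (mul_ne_zero (mul_ne_zero Complex.I_ne_zero hA)
        (mul_ne_zero Complex.I_ne_zero hB)) h0)]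
      field_simp
  have h2 : Filter.Tendsto (fun k : ℂ =>
      Complex.I * (A * B / (2 * (π : ℂ))) ^ ((1 : ℂ) / 2) * C ^ (Complex.I * k * C) *
        A ^ (-(Complex.I * k * A)) * B ^ (-(Complex.I * k * B)) *
        Complex.Gamma (Complex.I * A * k + 1) * Complex.Gamma (Complex.I * B * k + 1) /
        ((Complex.I * A) * (Complex.I * B) * Complex.Gamma (1 / 2 + Complex.I * C * k)))
      (nhds 0) (nhds (-Complex.I / ((π : ℂ) * s))) := by
    have hCp : ContinuousAt (fun k : ℂ => C ^ (Complex.I * k * C)) 0 :=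
      (continuousAt_const_cpow hC).comp (by fun_prop)
    have hAp : ContinuousAt (fun k : ℂ => A ^ (-(Complex.I * k * A))) 0 :=
      (continuousAt_const_cpow hA).comp (by fun_prop)
    have hBp : ContinuousAt (fun k : ℂ => B ^ (-(Complex.I * k * B))) 0 :=
      (continuousAt_const_cpow hB).comp (by fun_prop)
    have hG1 : ContinuousAt (fun k : ℂ => Complex.Gamma (Complex.I * A * k + 1)) 0 := by
      have h : ContinuousAt Complex.Gamma ((fun k : ℂ => Complex.I * A * k + 1) 0) := by
        simp only [mul_zero, zero_add]
        exact gammaContAt (by norm_num)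
      exact ContinuousAt.comp (x := (0:ℂ)) h (by fun_prop)
    have hG2 : ContinuousAt (fun k : ℂ => Complex.Gamma (Complex.I * B * k + 1)) 0 := by
      have h : ContinuousAt Complex.Gamma ((fun k : ℂ => Complex.I * B * k + 1) 0) := by
        simp only [mul_zero, zero_add]
        exact gammaContAt (by norm_num)
      exact ContinuousAt.comp (x := (0:ℂ)) h (by fun_prop)
    have hG3 : ContinuousAt (fun k : ℂ =>
        Complex.Gamma (1 / 2 + Complex.I * C * k)) 0 := by
      have h : ContinuousAt Complex.Gamma ((fun k : ℂ => 1 / 2 + Complex.I * C * k) 0) := by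
        simp only [mul_zero, add_zero]
        exact gammaContAt (by norm_num [Complex.div_re])
      exact ContinuousAt.comp (x := (0:ℂ)) h (by fun_prop)
    have hGhalf : Complex.Gamma (1 / 2 : ℂ) = ((Real.sqrt π : ℝ) : ℂ) := by
      rw [Complex.Gamma_one_half_eq, cpow_half_ofReal hπ.le]
    have hden : (Complex.I * A) * (Complex.I * B) *
        Complex.Gamma (1 / 2 + Complex.I * C * (0 : ℂ)) ≠ 0 := by
      simp only [mul_zero, add_zero]
      rw [hGhalf]
      exact mul_ne_zero (mul_ne_zero (mul_ne_zero Complex.I_ne_zero hA)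
        (mul_ne_zero Complex.I_ne_zero hB)) (Complex.ofReal_ne_zero.2 hsqrtπ.ne')
    have hc : ContinuousAt (fun k : ℂ =>
        Complex.I * (A * B / (2 * (π : ℂ))) ^ ((1 : ℂ) / 2) * C ^ (Complex.I * k * C) *
          A ^ (-(Complex.I * k * A)) * B ^ (-(Complex.I * k * B)) *
          Complex.Gamma (Complex.I * A * k + 1) * Complex.Gamma (Complex.I * B * k + 1) /
          ((Complex.I * A) * (Complex.I * B) * Complex.Gamma (1 / 2 + Complex.I * C * k))) 0 :=
      (((((continuousAt_const.mul hCp).mul hAp).mul hBp).mul hG1).mul hG2).div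
        ((continuousAt_const.mul continuousAt_const).mul hG3) hden
    have hval : Complex.I * (A * B / (2 * (π : ℂ))) ^ ((1 : ℂ) / 2) *
        C ^ (Complex.I * (0 : ℂ) * C) * A ^ (-(Complex.I * (0 : ℂ) * A)) *
        B ^ (-(Complex.I * (0 : ℂ) * B)) *
        Complex.Gamma (Complex.I * A * 0 + 1) * Complex.Gamma (Complex.I * B * 0 + 1) /
        ((Complex.I * A) * (Complex.I * B) * Complex.Gamma (1 / 2 + Complex.I * C * 0)) =
        -Complex.I / ((π : ℂ) * s) := by
      have hbase : A * B / (2 * (π : ℂ)) = ((1 / (2 * π) : ℝ) : ℂ) * (A * B) := by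
        push_cast
        field_simp
      have hY : (A * B / (2 * (π : ℂ))) ^ ((1 : ℂ) / 2) =
          ((Real.sqrt (1 / (2 * π)) : ℝ) : ℂ) * w := by
        rw [hbase, ofReal_mul_cpow (by positivity) _ _,
          cpow_half_ofReal (by positivity), hwdef]
      have hr : Real.sqrt (1 / (2 * π)) * Real.sqrt 2 * π = Real.sqrt π := by
        rw [one_div, Real.sqrt_inv, Real.sqrt_mul (by norm_num : (0 : ℝ) ≤ 2), mul_inv]
        field_simp
        linear_combination (-1) * Real.mul_self_sqrt hπ.le
      have hr' : ((Real.sqrt (1 / (2 * π)) : ℝ) : ℂ) * ((Real.sqrt 2 : ℝ) : ℂ) *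
          ((π : ℝ) : ℂ) = ((Real.sqrt π : ℝ) : ℂ) := by
        have := congrArg (fun x : ℝ => (x : ℂ)) hr
        push_cast at this
        exact this
      simp only [mul_zero, zero_mul, neg_zero, Complex.cpow_zero, mul_one, zero_add,
        add_zero, Complex.Gamma_one, one_mul]
      rw [hY, hGhalf, hsw]
      rw [div_eq_div_iff
        (mul_ne_zero (mul_ne_zero (mul_ne_zero Complex.I_ne_zero hA)
          (mul_ne_zero Complex.I_ne_zero hB)) (Complex.ofReal_ne_zero.2 hsqrtπ.ne'))
        (mul_ne_zero hπ' (mul_ne_zero (Complex.ofReal_ne_zero.2 hsqrt2.ne') hw))]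
      linear_combination (Complex.I * w * w) * hr' +
        Complex.I * ((Real.sqrt π : ℝ) : ℂ) * hww +
        (Complex.I * A * B * ((Real.sqrt π : ℝ) : ℂ)) * Complex.I_mul_I
    exact hval ▸ hc.tendsto
  refine ⟨?_, ?_, part3⟩
  · refine Filter.Tendsto.congr' ?_ (h1.mono_left nhdsWithin_le_nhds)
    exact Filter.eventuallyEq_of_mem self_mem_nhdsWithin
      fun k hk => (key1 k (Set.mem_compl_singleton_iff.1 hk)).symm
  · refine Filter.Tendsto.congr' ?_ (h2.mono_left nhdsWithin_le_nhds)
    exact Filter.eventuallyEq_of_mem self_mem_nhdsWithin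
      fun k hk => (key2 k (Set.mem_compl_singleton_iff.1 hk)).symm

end
end
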